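/- For every prime power q and every integer n ≥ 1, |‖δ₀P_sym^n − π_sym‖_tv − c_n·q^{−n}| ≤ (α(q)^{−2} − 1)^{1/2} · q^{−2n}, where c_n = 2qα(q)/(q²−1) if n is even and c_n = 2qα(q)/((q²−1)(q−1)) if n is odd. -/

import Mathlib

set_option maxHeartbeats 2000000


noncomputable section

/-- The tridiagonal transition matrix `P_sym` for the symmetric-matrix Markov chain. -/
def Psym (q : ℝ) (i j : ℕ) : ℝ :=
  if j = i + 1 then q⁻¹ ^ (i + 1)
  else if j = i then q⁻¹ ^ i - q⁻¹ ^ (i + 1)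
  else if i = j + 1 then 1 - q⁻¹ ^ i
  else 0

/-- `α(q) = ∏_{i ≥ 1, i odd} (1 − q^{-i})`. -/
def alphaQ (q : ℝ) : ℝ := ∏' i : ℕ, (1 - q⁻¹ ^ (2 * i + 1))

/-- The stationary distribution `π_sym(k) = α(q)/∏_{i=1}^{k}(q^i − 1)`. -/
def piSym (q : ℝ) (k : ℕ) : ℝ := alphaQ q / ∏ i ∈ Finset.range k, (q ^ (i + 1) - 1)

/-- The action `μ ↦ μP`, `(μP)(j) = Σ_i μ(i)P(i,j)`. -/
def applyP (P : ℕ → ℕ → ℝ) (μ : ℕ → ℝ) : ℕ → ℝ := fun j => ∑' i : ℕ, μ i * P i j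

/-- `δ₀`. -/
def delta0 : ℕ → ℝ := fun i => if i = 0 then 1 else 0

namespace Stmt13

def gpp (q : ℝ) (M : ℕ) : ℝ := ∏ i ∈ Finset.range M, (1 - q⁻¹ ^ (2 * i + 1))
def Opp (q : ℝ) (m : ℕ) : ℝ := gpp q ((m + 1) / 2)
def Ipp (q : ℝ) (a b : ℕ) : ℝ := ∏ i ∈ Finset.Ico a b, (1 - q⁻¹ ^ (i + 1))
def Dk (q : ℝ) (k : ℕ) : ℝ := ∏ i ∈ Finset.range k, (q ^ (i + 1) - 1)
def muF (q : ℝ) (n k : ℕ) : ℝ :=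
  if k ≤ n then Opp q (n - k) * Ipp q (n - k) n / Dk q k else 0

variable {q : ℝ}

section basic
variable (hq : 2 ≤ q)
include hq
lemma hq0 : q ≠ 0 := by linarith
lemma ht_pos : 0 < q⁻¹ := inv_pos.mpr (by linarith)
lemma ht_half : q⁻¹ ≤ 1 / 2 := by
  rw [inv_le_comm₀ (by linarith) (by norm_num)]; linarith
lemma tpow_pos (k : ℕ) : 0 < q⁻¹ ^ k := pow_pos (ht_pos hq) k
lemma tpow_le_one (k : ℕ) : q⁻¹ ^ k ≤ 1 :=
  pow_le_one₀ (le_of_lt (ht_pos hq)) (by linarith [ht_half hq])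
lemma tpow_succ_le_half (k : ℕ) : q⁻¹ ^ (k + 1) ≤ 1 / 2 := by
  calc q⁻¹ ^ (k + 1) = q⁻¹ ^ k * q⁻¹ := pow_succ _ _
    _ ≤ 1 * (1 / 2) := by
        apply mul_le_mul (tpow_le_one hq k) (ht_half hq) (le_of_lt (ht_pos hq)) zero_le_one
    _ = 1 / 2 := by norm_num
lemma factor_pos (k : ℕ) : 0 < 1 - q⁻¹ ^ (k + 1) := by
  have := tpow_succ_le_half hq k; linarith
lemma factor_le_one (k : ℕ) : 1 - q⁻¹ ^ (k + 1) ≤ 1 := by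
  have := tpow_pos hq (k + 1); linarith
lemma gpp_pos (M : ℕ) : 0 < gpp q M :=
  Finset.prod_pos fun i _ => by simpa [add_comm] using factor_pos hq (2 * i)
lemma gpp_le_one (M : ℕ) : gpp q M ≤ 1 :=
  Finset.prod_le_one (fun i _ => le_of_lt (by simpa [add_comm] using factor_pos hq (2 * i)))
    (fun i _ => by simpa using factor_le_one hq (2 * i))
lemma Opp_pos (m : ℕ) : 0 < Opp q m := gpp_pos hq _
lemma Opp_le_one (m : ℕ) : Opp q m ≤ 1 := gpp_le_one hq _
lemma Ipp_pos (a b : ℕ) : 0 < Ipp q a b :=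
  Finset.prod_pos fun i _ => factor_pos hq i
lemma Ipp_le_one (a b : ℕ) : Ipp q a b ≤ 1 :=
  Finset.prod_le_one (fun i _ => le_of_lt (factor_pos hq i)) (fun i _ => factor_le_one hq i)
lemma qpow_sub_one_pos (k : ℕ) : 0 < q ^ (k + 1) - 1 := by
  have : (1:ℝ) < q ^ (k + 1) := by apply one_lt_pow₀ (by linarith) (by omega)
  linarith
lemma Dk_pos (k : ℕ) : 0 < Dk q k :=
  Finset.prod_pos fun i _ => qpow_sub_one_pos hq i
end basic

lemma Opp_zero : Opp q 0 = 1 := by simp [Opp, gpp]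
lemma Opp_succ_odd (m : ℕ) (h : (m + 1) % 2 = 1) :
    Opp q (m + 1) = Opp q m * (1 - q⁻¹ ^ (m + 1)) := by
  unfold Opp gpp
  have h2 : (m + 2) / 2 = (m + 1) / 2 + 1 := by omega
  rw [h2, Finset.prod_range_succ]
  have h3 : 2 * ((m + 1) / 2) + 1 = m + 1 := by omega
  rw [h3]
lemma Opp_succ_even (m : ℕ) (h : (m + 1) % 2 = 0) : Opp q (m + 1) = Opp q m := by
  have h2 : (m + 1 + 1) / 2 = (m + 1) / 2 := by omega
  unfold Opp gpp
  rw [h2]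
lemma Ipp_self (a : ℕ) : Ipp q a a = 1 := by simp [Ipp]
lemma Ipp_succ_top {a b : ℕ} (h : a ≤ b) :
    Ipp q a (b + 1) = Ipp q a b * (1 - q⁻¹ ^ (b + 1)) := by
  unfold Ipp; rw [Finset.prod_Ico_succ_top h]
lemma Ipp_succ_bot {a b : ℕ} (h : a < b) :
    Ipp q a b = (1 - q⁻¹ ^ (a + 1)) * Ipp q (a + 1) b := by
  unfold Ipp; rw [Finset.prod_eq_prod_Ico_succ_bot h]
lemma Dk_zero : Dk q 0 = 1 := by simp [Dk]
lemma Dk_succ (k : ℕ) : Dk q (k + 1) = Dk q k * (q ^ (k + 1) - 1) := by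
  unfold Dk; rw [Finset.prod_range_succ]
lemma Dk_one : Dk q 1 = q - 1 := by simp [Dk]

lemma muF_le (n k : ℕ) (h : k ≤ n) :
    muF q n k = Opp q (n - k) * Ipp q (n - k) n / Dk q k := if_pos h
lemma muF_gt (n k : ℕ) (h : n < k) : muF q n k = 0 := if_neg (by omega)
lemma muF_zero' (n : ℕ) : muF q n 0 = Opp q n := by
  rw [muF_le n 0 (by omega)]
  simp [Ipp_self, Dk_zero]

lemma applyP_zero (μ : ℕ → ℝ) :
    applyP (Psym q) μ 0 = μ 0 * (1 - q⁻¹) + μ 1 * (1 - q⁻¹) := by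
  unfold applyP
  rw [tsum_eq_sum (s := ({0, 1} : Finset ℕ)) ?_]
  · rw [Finset.sum_insert (by decide), Finset.sum_singleton]
    have h0 : Psym q 0 0 = 1 - q⁻¹ := by norm_num [Psym]
    have h1 : Psym q 1 0 = 1 - q⁻¹ := by norm_num [Psym]
    rw [h0, h1]
  · intro i hi
    simp only [Finset.mem_insert, Finset.mem_singleton, not_or] at hi
    have : Psym q i 0 = 0 := by
      unfold Psym
      rw [if_neg (by omega), if_neg (by omega), if_neg (by omega)]
    simp [this]

lemma applyP_succ (μ : ℕ → ℝ) (m : ℕ) :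
    applyP (Psym q) μ (m + 1) =
      μ m * q⁻¹ ^ (m + 1) + μ (m + 1) * (q⁻¹ ^ (m + 1) - q⁻¹ ^ (m + 2))
        + μ (m + 2) * (1 - q⁻¹ ^ (m + 2)) := by
  unfold applyP
  rw [tsum_eq_sum (s := ({m, m + 1, m + 2} : Finset ℕ)) ?_]
  · rw [Finset.sum_insert (by simp only [Finset.mem_insert, Finset.mem_singleton]; omega),
      Finset.sum_insert (by simp only [Finset.mem_singleton]; omega),
      Finset.sum_singleton]
    have h0 : Psym q m (m + 1) = q⁻¹ ^ (m + 1) := by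
      unfold Psym; rw [if_pos rfl]
    have h1 : Psym q (m + 1) (m + 1) = q⁻¹ ^ (m + 1) - q⁻¹ ^ (m + 2) := by
      unfold Psym; rw [if_neg (by omega), if_pos rfl]
    have h2 : Psym q (m + 2) (m + 1) = 1 - q⁻¹ ^ (m + 2) := by
      unfold Psym; rw [if_neg (by omega), if_neg (by omega), if_pos rfl]
    rw [h0, h1, h2]; ring
  · intro i hi
    simp only [Finset.mem_insert, Finset.mem_singleton, not_or] at hi
    have : Psym q i (m + 1) = 0 := by
      unfold Psym
      rw [if_neg (by omega), if_neg (by omega), if_neg (by omega)]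
    simp [this]

theorem applyP_muF (hq : 2 ≤ q) (n : ℕ) : applyP (Psym q) (muF q n) = muF q (n + 1) := by
  have hq0' : q ≠ 0 := hq0 hq
  have hqm1 : q - 1 ≠ 0 := by nlinarith
  funext j
  cases j with
  | zero =>
    rw [applyP_zero, muF_zero', muF_zero']
    rcases Nat.eq_zero_or_pos n with rfl | hn
    · rw [muF_gt 0 1 (by omega), Opp_succ_odd 0 (by norm_num), Opp_zero, pow_one]
      ring
    · obtain ⟨m, rfl⟩ : ∃ m, n = m + 1 := ⟨n - 1, by omega⟩
      rw [muF_le (m + 1) 1 (by omega)]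
      have hs : m + 1 - 1 = m := by omega
      rw [hs, Ipp_succ_bot (by omega : m < m + 1), Ipp_self, Dk_one]
      rcases Nat.mod_two_eq_zero_or_one (m + 1) with hpar | hpar
      · -- m+1 even: Opp (m+1) = Opp m ; Opp (m+2) = Opp (m+1) * (1 - t^(m+2))
        rw [Opp_succ_odd (m + 1) (by omega), Opp_succ_even m hpar]
        simp only [inv_pow]
        field_simp
        ring
      · -- m+1 odd
        rw [Opp_succ_even (m + 1) (by omega), Opp_succ_odd m hpar]
        simp only [inv_pow]
        field_simp
        ring
  | succ m =>
    rw [applyP_succ]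
    by_cases hmn : n ≤ m
    · rcases eq_or_lt_of_le hmn with rfl | hlt
      · -- m = n : boundary
        rw [muF_le n n le_rfl, muF_gt n (n + 1) (by omega), muF_gt n (n + 2) (by omega),
          muF_le (n + 1) (n + 1) le_rfl]
        simp only [Nat.sub_self]
        rw [Opp_zero, Ipp_succ_top (by omega : 0 ≤ n), Dk_succ]
        have hD := (Dk_pos hq n).ne'
        have hP := (qpow_sub_one_pos hq n).ne'
        simp only [inv_pow]
        field_simp
        ring
      · -- n < m : everything vanishes
        rw [muF_gt n m hlt, muF_gt n (m + 1) (by omega), muF_gt n (m + 2) (by omega),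
          muF_gt (n + 1) (m + 1) (by omega)]
        ring
    · push_neg at hmn
      by_cases ha : m + 1 = n
      · -- j = n
        subst ha
        rw [muF_le (m + 1) m (by omega), muF_le (m + 1) (m + 1) le_rfl,
          muF_gt (m + 1) (m + 2) (by omega), muF_le (m + 1 + 1) (m + 1) (by omega)]
        have h1 : m + 1 - m = 1 := by omega
        have h2 : m + 1 + 1 - (m + 1) = 1 := by omega
        rw [h1, h2]
        simp only [Nat.sub_self]
        rw [Opp_zero, Opp_succ_odd 0 (by norm_num), Opp_zero,
          Ipp_succ_bot (by omega : 0 < m + 1),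
          Ipp_succ_top (by omega : 1 ≤ m + 1), Dk_succ]
        simp only [zero_add, pow_one]
        have hD := (Dk_pos hq m).ne'
        have hP := (qpow_sub_one_pos hq m).ne'
        simp only [inv_pow]
        field_simp
        ring
      · -- m + 2 ≤ n
        obtain ⟨b, rfl⟩ : ∃ b, n = m + 2 + b := ⟨n - (m + 2), by omega⟩
        rw [muF_le (m + 2 + b) m (by omega), muF_le (m + 2 + b) (m + 1) (by omega),
          muF_le (m + 2 + b) (m + 2) (by omega), muF_le (m + 2 + b + 1) (m + 1) (by omega)]
        have e1 : m + 2 + b - m = b + 2 := by omega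
        have e2 : m + 2 + b - (m + 1) = b + 1 := by omega
        have e3 : m + 2 + b - (m + 2) = b := by omega
        have e4 : m + 2 + b + 1 - (m + 1) = b + 2 := by omega
        rw [e1, e2, e3, e4]
        rw [Ipp_succ_bot (by omega : b + 1 < m + 2 + b),
          Ipp_succ_bot (by omega : b < m + 2 + b),
          Ipp_succ_bot (by omega : b + 1 < m + 2 + b),
          (by omega : m + 2 + b + 1 = (m + 2 + b) + 1),
          Ipp_succ_top (by omega : b + 2 ≤ m + 2 + b),
          Dk_succ (m + 1), Dk_succ m]
        have hD := (Dk_pos hq m).ne'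
        have hP1 := (qpow_sub_one_pos hq m).ne'
        have hP2 := (qpow_sub_one_pos hq (m + 1)).ne'
        have hI := (Ipp_pos hq (b + 2) (m + 2 + b)).ne'
        rcases Nat.mod_two_eq_zero_or_one (b + 1) with hpar | hpar
        · -- b odd
          rw [Opp_succ_odd (b + 1) (by omega), Opp_succ_even b hpar]
          simp only [inv_pow]
          field_simp
          ring
        · -- b even
          rw [Opp_succ_even (b + 1) (by omega), Opp_succ_odd b hpar]
          simp only [inv_pow]
          field_simp
          ring

theorem iter_eq (hq : 2 ≤ q) (n : ℕ) : (applyP (Psym q))^[n] delta0 = muF q n := by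
  induction n with
  | zero =>
    funext k
    simp only [Function.iterate_zero, id_eq, delta0, muF]
    rcases Nat.eq_zero_or_pos k with rfl | hk
    · simp [Opp_zero, Ipp_self, Dk_zero]
    · rw [if_neg (by omega), if_neg (by omega)]
  | succ n ih =>
    rw [Function.iterate_succ_apply', ih, applyP_muF hq]


-- Weierstrass-type product inequalities
lemma prod_one_sub_ge (s : Finset ℕ) (x : ℕ → ℝ) (h0 : ∀ i ∈ s, 0 ≤ x i)
    (h1 : ∀ i ∈ s, x i ≤ 1) :
    1 - ∑ i ∈ s, x i ≤ ∏ i ∈ s, (1 - x i) := by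
  classical
  induction s using Finset.cons_induction with
  | empty => simp
  | cons a s ha ih =>
    rw [Finset.sum_cons, Finset.prod_cons]
    have hA : 0 ≤ ∏ i ∈ s, (1 - x i) :=
      Finset.prod_nonneg fun i hi => by
        have := h1 i (Finset.mem_cons_of_mem hi); linarith
    have hs : 0 ≤ ∑ i ∈ s, x i :=
      Finset.sum_nonneg fun i hi => h0 i (Finset.mem_cons_of_mem hi)
    have ihs := ih (fun i hi => h0 i (Finset.mem_cons_of_mem hi))
      (fun i hi => h1 i (Finset.mem_cons_of_mem hi))
    have hxa0 := h0 a (Finset.mem_cons_self a s)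
    have hxa1 := h1 a (Finset.mem_cons_self a s)
    nlinarith

lemma prod_one_sub_mul_le (s : Finset ℕ) (x : ℕ → ℝ) (h0 : ∀ i ∈ s, 0 ≤ x i)
    (h1 : ∀ i ∈ s, x i ≤ 1) :
    (∏ i ∈ s, (1 - x i)) * (1 + ∑ i ∈ s, x i) ≤ 1 := by
  classical
  induction s using Finset.cons_induction with
  | empty => simp
  | cons a s ha ih =>
    rw [Finset.sum_cons, Finset.prod_cons]
    have hA : 0 ≤ ∏ i ∈ s, (1 - x i) :=
      Finset.prod_nonneg fun i hi => by
        have := h1 i (Finset.mem_cons_of_mem hi); linarith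
    have hs : 0 ≤ ∑ i ∈ s, x i :=
      Finset.sum_nonneg fun i hi => h0 i (Finset.mem_cons_of_mem hi)
    have ihs := ih (fun i hi => h0 i (Finset.mem_cons_of_mem hi))
      (fun i hi => h1 i (Finset.mem_cons_of_mem hi))
    have hxa0 := h0 a (Finset.mem_cons_self a s)
    have hxa1 := h1 a (Finset.mem_cons_self a s)
    nlinarith [mul_nonneg hA (mul_nonneg hxa0 hs), mul_nonneg hA (mul_nonneg hxa0 hxa0)]


open Filter Finset Topology

/-- partial sums of the odd geometric series -/
lemma sum_odd_pow (hq : 2 ≤ q) (M : ℕ) :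
    ∑ i ∈ Finset.range M, q⁻¹ ^ (2 * i + 1)
      = (q⁻¹ - q⁻¹ ^ (2 * M + 1)) / (1 - q⁻¹ ^ 2) := by
  have ht0 := ht_pos hq
  have ht2 : q⁻¹ ^ 2 < 1 := by nlinarith [ht_half hq]
  have hne : q⁻¹ ^ 2 - 1 ≠ 0 := by nlinarith
  have : ∀ i : ℕ, q⁻¹ ^ (2 * i + 1) = q⁻¹ * (q⁻¹ ^ 2) ^ i := by
    intro i; rw [← pow_mul, pow_succ, mul_comm]
  have hpos : 0 < 1 - q⁻¹ ^ 2 := by nlinarith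
  rw [Finset.sum_congr rfl fun i _ => this i, ← Finset.mul_sum, geom_sum_eq (by nlinarith),
    ← pow_mul, ← mul_div_assoc, div_eq_div_iff hne hpos.ne']
  ring

lemma sum_Ico_odd_pow (hq : 2 ≤ q) {M N : ℕ} (h : M ≤ N) :
    ∑ i ∈ Finset.Ico M N, q⁻¹ ^ (2 * i + 1)
      = (q⁻¹ ^ (2 * M + 1) - q⁻¹ ^ (2 * N + 1)) / (1 - q⁻¹ ^ 2) := by
  rw [Finset.sum_Ico_eq_sub _ h, sum_odd_pow hq, sum_odd_pow hq]
  ring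

/-- the tail bound quantity -/
def SS (q : ℝ) (M : ℕ) : ℝ := q⁻¹ ^ (2 * M + 1) / (1 - q⁻¹ ^ 2)

lemma one_sub_sq_pos (hq : 2 ≤ q) : 0 < 1 - q⁻¹ ^ 2 := by
  nlinarith [ht_half hq, ht_pos hq]

lemma SS_nonneg (hq : 2 ≤ q) (M : ℕ) : 0 ≤ SS q M :=
  div_nonneg (le_of_lt (tpow_pos hq _)) (le_of_lt (one_sub_sq_pos hq))

lemma SS_le (hq : 2 ≤ q) (M : ℕ) : SS q M ≤ 4 / 3 * q⁻¹ ^ (2 * M + 1) := by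
  have h1 : (3:ℝ)/4 ≤ 1 - q⁻¹ ^ 2 := by nlinarith [ht_half hq, ht_pos hq]
  have h2 := tpow_pos hq (2 * M + 1)
  unfold SS
  rw [div_le_iff₀ (one_sub_sq_pos hq)]
  nlinarith

lemma sum_Ico_odd_le (hq : 2 ≤ q) {M N : ℕ} (h : M ≤ N) :
    ∑ i ∈ Finset.Ico M N, q⁻¹ ^ (2 * i + 1) ≤ SS q M := by
  rw [sum_Ico_odd_pow hq h]
  unfold SS
  gcongr
  · exact le_of_lt (one_sub_sq_pos hq)
  · linarith [tpow_pos hq (2 * N + 1)]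

lemma summable_log (hq : 2 ≤ q) :
    Summable fun i : ℕ => Real.log (1 - q⁻¹ ^ (2 * i + 1)) := by
  have ht0 := ht_pos hq
  apply Summable.of_norm_bounded (g := fun i => 2 * q⁻¹ ^ (2 * i + 1))
  · have hg : Summable fun i : ℕ => 2 * q⁻¹ * (q⁻¹ ^ 2) ^ i := by
      apply Summable.mul_left
      apply summable_geometric_of_lt_one (by positivity)
      nlinarith [ht_half hq]
    apply hg.congr
    intro i
    rw [← pow_mul, pow_succ]
    ring
  · intro i
    have hx0 := tpow_pos hq (2 * i + 1)
    have hx1 := tpow_succ_le_half hq (2 * i)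
    have hf0 : (0:ℝ) < 1 - q⁻¹ ^ (2 * i + 1) := factor_pos hq (2 * i)
    rw [Real.norm_eq_abs, abs_of_nonpos (Real.log_nonpos (by linarith) (by linarith))]
    have hlog : Real.log (1 - q⁻¹ ^ (2 * i + 1))⁻¹ ≤ (1 - q⁻¹ ^ (2 * i + 1))⁻¹ - 1 :=
      Real.log_le_sub_one_of_pos (by positivity)
    rw [Real.log_inv] at hlog
    have hinv : (1 - q⁻¹ ^ (2 * i + 1))⁻¹ ≤ 1 + 2 * q⁻¹ ^ (2 * i + 1) := by
      rw [inv_eq_one_div, div_le_iff₀ hf0]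
      nlinarith
    linarith
  
lemma multipliable_gpp (hq : 2 ≤ q) :
    Multipliable fun i : ℕ => (1 - q⁻¹ ^ (2 * i + 1)) := by
  exact Real.multipliable_of_summable_log (fun i => factor_pos hq (2 * i)) (summable_log hq)

lemma tendsto_gpp (hq : 2 ≤ q) :
    Tendsto (fun M => gpp q M) atTop (𝓝 (alphaQ q)) :=
  (multipliable_gpp hq).hasProd.tendsto_prod_nat



lemma tendsto_odd_pow_zero (hq : 2 ≤ q) :
    Tendsto (fun N : ℕ => q⁻¹ ^ (2 * N + 1)) atTop (𝓝 0) := by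
  have h2 : q⁻¹ ^ 2 < 1 := by nlinarith [ht_half hq, ht_pos hq]
  have h := (tendsto_pow_atTop_nhds_zero_of_lt_one (by positivity) h2).const_mul q⁻¹
  rw [mul_zero] at h
  apply h.congr
  intro N
  rw [← pow_mul, pow_succ, mul_comm]

lemma gpp_split (hq : 2 ≤ q) {M N : ℕ} (h : M ≤ N) :
    gpp q N = gpp q M * ∏ i ∈ Finset.Ico M N, (1 - q⁻¹ ^ (2 * i + 1)) :=
  (Finset.prod_range_mul_prod_Ico _ h).symm

lemma factA (hq : 2 ≤ q) (M : ℕ) : gpp q M * (1 - SS q M) ≤ alphaQ q := by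
  apply ge_of_tendsto (tendsto_gpp hq)
  rw [eventually_atTop]
  refine ⟨M, fun N hN => ?_⟩
  rw [gpp_split hq hN]
  have h1 : 1 - SS q M ≤ ∏ i ∈ Finset.Ico M N, (1 - q⁻¹ ^ (2 * i + 1)) := by
    refine le_trans ?_ (prod_one_sub_ge _ _ (fun i _ => le_of_lt (tpow_pos hq _))
      (fun i _ => le_trans (tpow_succ_le_half hq _) (by norm_num)))
    linarith [sum_Ico_odd_le hq hN]
  exact mul_le_mul_of_nonneg_left h1 (le_of_lt (gpp_pos hq M))

lemma tendsto_sum_Ico_odd (hq : 2 ≤ q) (M : ℕ) :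
    Tendsto (fun N => ∑ i ∈ Finset.Ico M N, q⁻¹ ^ (2 * i + 1)) atTop (𝓝 (SS q M)) := by
  have h1 : Tendsto (fun N : ℕ => (q⁻¹ ^ (2 * M + 1) - q⁻¹ ^ (2 * N + 1)) / (1 - q⁻¹ ^ 2))
      atTop (𝓝 ((q⁻¹ ^ (2 * M + 1) - 0) / (1 - q⁻¹ ^ 2))) :=
    (tendsto_const_nhds.sub (tendsto_odd_pow_zero hq)).div_const _
  rw [sub_zero] at h1
  apply h1.congr'
  rw [Filter.eventuallyEq_iff_exists_mem]
  exact ⟨Set.Ici M, Filter.Ici_mem_atTop M, fun N hN => (sum_Ico_odd_pow hq hN).symm⟩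

lemma factB (hq : 2 ≤ q) (M : ℕ) : alphaQ q * (1 + SS q M) ≤ gpp q M := by
  have hT : Tendsto (fun N => gpp q N * (1 + ∑ i ∈ Finset.Ico M N, q⁻¹ ^ (2 * i + 1)))
      atTop (𝓝 (alphaQ q * (1 + SS q M))) :=
    (tendsto_gpp hq).mul (tendsto_const_nhds.add (tendsto_sum_Ico_odd hq M))
  apply le_of_tendsto hT
  rw [eventually_atTop]
  refine ⟨M, fun N hN => ?_⟩
  rw [gpp_split hq hN, mul_assoc]
  have h1 : (∏ i ∈ Finset.Ico M N, (1 - q⁻¹ ^ (2 * i + 1)))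
      * (1 + ∑ i ∈ Finset.Ico M N, q⁻¹ ^ (2 * i + 1)) ≤ 1 :=
    prod_one_sub_mul_le _ _ (fun i _ => le_of_lt (tpow_pos hq _))
      (fun i _ => le_trans (tpow_succ_le_half hq _) (by norm_num))
  calc gpp q M * ((∏ i ∈ Finset.Ico M N, (1 - q⁻¹ ^ (2 * i + 1)))
      * (1 + ∑ i ∈ Finset.Ico M N, q⁻¹ ^ (2 * i + 1)))
      ≤ gpp q M * 1 := mul_le_mul_of_nonneg_left h1 (le_of_lt (gpp_pos hq M))
    _ = gpp q M := mul_one _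

lemma alpha_pos (hq : 2 ≤ q) : 1 / 3 ≤ alphaQ q := by
  have h := factA hq 0
  have h1 : gpp q 0 = 1 := by simp [gpp]
  have h2 : SS q 0 ≤ 4 / 3 * q⁻¹ ^ 1 := by simpa using SS_le hq 0
  have h3 : q⁻¹ ≤ 1 / 2 := ht_half hq
  rw [h1, one_mul] at h
  have : q⁻¹ ^ 1 = q⁻¹ := pow_one _
  nlinarith

lemma alpha_le_gpp (hq : 2 ≤ q) (M : ℕ) : alphaQ q ≤ gpp q M := by
  have h := factB hq M
  have h1 := SS_nonneg hq M
  have h2 := alpha_pos hq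
  nlinarith

lemma alpha_le_one_sub (hq : 2 ≤ q) : alphaQ q ≤ 1 - q⁻¹ := by
  have h := alpha_le_gpp hq 1
  have : gpp q 1 = 1 - q⁻¹ := by simp [gpp]
  linarith



def Ev (q : ℝ) (a b : ℕ) : ℝ :=
  ∏ i ∈ Finset.Ico a b, (if (i + 1) % 2 = 0 then 1 - q⁻¹ ^ (i + 1) else 1)

lemma Ev_self (a : ℕ) : Ev q a a = 1 := by simp [Ev]

lemma Ev_succ_top {a b : ℕ} (h : a ≤ b) :
    Ev q a (b + 1) = Ev q a b * (if (b + 1) % 2 = 0 then 1 - q⁻¹ ^ (b + 1) else 1) := by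
  unfold Ev; rw [Finset.prod_Ico_succ_top h]

lemma Ev_factor_nonneg (hq : 2 ≤ q) (i : ℕ) :
    0 ≤ (if (i + 1) % 2 = 0 then 1 - q⁻¹ ^ (i + 1) else 1) := by
  split
  · exact le_of_lt (factor_pos hq i)
  · norm_num

lemma Ev_factor_le_one (hq : 2 ≤ q) (i : ℕ) :
    (if (i + 1) % 2 = 0 then 1 - q⁻¹ ^ (i + 1) else 1) ≤ 1 := by
  split
  · exact factor_le_one hq i
  · norm_num

lemma Ev_pos (hq : 2 ≤ q) (a b : ℕ) : 0 < Ev q a b :=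
  Finset.prod_pos fun i _ => by
    split
    · exact factor_pos hq i
    · norm_num

lemma Ev_le_one (hq : 2 ≤ q) (a b : ℕ) : Ev q a b ≤ 1 :=
  Finset.prod_le_one (fun i _ => Ev_factor_nonneg hq i) (fun i _ => Ev_factor_le_one hq i)

lemma keyprod (a : ℕ) : ∀ b, a ≤ b → Opp q a * Ipp q a b = Opp q b * Ev q a b := by
  intro b hb
  induction b, hb using Nat.le_induction with
  | base => rw [Ipp_self, Ev_self]
  | succ b hb ih =>
    rw [Ipp_succ_top hb, Ev_succ_top hb, ← mul_assoc, ih]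
    rcases Nat.mod_two_eq_zero_or_one (b + 1) with h2 | h2
    · rw [if_pos h2, Opp_succ_even b h2]; ring
    · rw [if_neg (by omega), Opp_succ_odd b h2]; ring

lemma Ev_le_single (hq : 2 ≤ q) {a e b : ℕ} (h1 : a ≤ e) (h2 : e < b)
    (hpar : (e + 1) % 2 = 0) : Ev q a b ≤ 1 - q⁻¹ ^ (e + 1) := by
  have hmem : e ∈ Finset.Ico a b := Finset.mem_Ico.mpr ⟨h1, h2⟩
  rw [Ev, ← Finset.mul_prod_erase _ _ hmem, if_pos hpar]
  have h3 : ∏ i ∈ (Finset.Ico a b).erase e,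
      (if (i + 1) % 2 = 0 then 1 - q⁻¹ ^ (i + 1) else 1) ≤ 1 :=
    Finset.prod_le_one (fun i _ => Ev_factor_nonneg hq i) (fun i _ => Ev_factor_le_one hq i)
  exact mul_le_of_le_one_right (le_of_lt (factor_pos hq e)) h3

lemma muF_eq_Ev (hq : 2 ≤ q) {n k : ℕ} (h : k ≤ n) :
    muF q n k = Opp q n * Ev q (n - k) n / Dk q k := by
  rw [muF_le n k h, keyprod (n - k) n (by omega)]

lemma muF_mass (hq : 2 ≤ q) (n : ℕ) : ∑ k ∈ Finset.range (n + 1), muF q n k = 1 := by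
  induction n with
  | zero => simp [muF_zero', Opp_zero]
  | succ n ih =>
    have hmu : ∀ j, muF q (n + 1) j = applyP (Psym q) (muF q n) j := by
      intro j; rw [applyP_muF hq]
    set μ := muF q n with hμ
    have hz1 : μ (n + 1) = 0 := muF_gt n (n + 1) (by omega)
    have hz2 : μ (n + 2) = 0 := muF_gt n (n + 2) (by omega)
    rw [Finset.sum_congr rfl fun j _ => hmu j,
      Finset.sum_range_succ' (fun j => applyP (Psym q) μ j) (n + 1),
      applyP_zero, Finset.sum_congr rfl (fun i _ => applyP_succ μ i),
      Finset.sum_add_distrib, Finset.sum_add_distrib]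
    have e1 := Finset.sum_range_succ' (fun i => μ i * (q⁻¹ ^ i - q⁻¹ ^ (i + 1))) (n + 1)
    have e2 := Finset.sum_range_succ (fun i => μ i * (q⁻¹ ^ i - q⁻¹ ^ (i + 1))) (n + 1)
    have e3 := Finset.sum_range_succ' (fun i => μ (i + 1) * (1 - q⁻¹ ^ (i + 1))) (n + 1)
    have e4 := Finset.sum_range_succ (fun i => μ (i + 1) * (1 - q⁻¹ ^ (i + 1))) (n + 1)
    have e5 := Finset.sum_range_succ' (fun i => μ i * (1 - q⁻¹ ^ i)) (n + 1)
    have e6 := Finset.sum_range_succ (fun i => μ i * (1 - q⁻¹ ^ i)) (n + 1)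
    simp only [hz1, hz2, zero_mul, add_zero, pow_zero, pow_one] at e1 e2 e3 e4 e5 e6
    have key : (∑ i ∈ Finset.range (n + 1), μ i * q⁻¹ ^ (i + 1))
        + (∑ i ∈ Finset.range (n + 1), μ i * (q⁻¹ ^ i - q⁻¹ ^ (i + 1)))
        + (∑ i ∈ Finset.range (n + 1), μ i * (1 - q⁻¹ ^ i))
        = ∑ i ∈ Finset.range (n + 1), μ i := by
      rw [← Finset.sum_add_distrib, ← Finset.sum_add_distrib]
      apply Finset.sum_congr rfl
      intro i _
      ring
    rw [ih] at key
    linarith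

lemma summable_muF (n : ℕ) : Summable (muF q n) := by
  apply summable_of_ne_finset_zero (s := Finset.range (n + 1))
  intro k hk
  exact muF_gt n k (by simpa [Finset.mem_range] using hk)

lemma tsum_muF (hq : 2 ≤ q) (n : ℕ) : ∑' k, muF q n k = 1 := by
  rw [tsum_eq_sum (s := Finset.range (n + 1))
    (fun k hk => muF_gt n k (by simpa [Finset.mem_range] using hk))]
  exact muF_mass hq n

lemma Dk_ge (hq : 2 ≤ q) (k : ℕ) : (2:ℝ) ^ k ≤ 2 * Dk q k := by
  induction k with
  | zero => norm_num [Dk_zero]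
  | succ k ih =>
    rw [Dk_succ]
    rcases Nat.eq_zero_or_pos k with rfl | hk
    · simp only [Dk_zero, pow_one, one_mul]
      norm_num
      linarith
    · have h2 : (2:ℝ) ≤ q ^ (k + 1) - 1 := by
        have : (2:ℝ) ^ (k + 1) ≤ q ^ (k + 1) :=
          pow_le_pow_left₀ (by norm_num) hq _
        have h4 : (4:ℝ) ≤ 2 ^ (k + 1) := by
          calc (4:ℝ) = 2 ^ 2 := by norm_num
          _ ≤ 2 ^ (k + 1) := pow_le_pow_right₀ (by norm_num) (by omega)
        linarith
      have hD := Dk_pos hq k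
      calc (2:ℝ) ^ (k + 1) = 2 ^ k * 2 := by ring
        _ ≤ 2 * Dk q k * 2 := by nlinarith
        _ ≤ 2 * (Dk q k * (q ^ (k + 1) - 1)) := by nlinarith

lemma piSym_eq (k : ℕ) : piSym q k = alphaQ q / Dk q k := rfl

lemma alpha_le_one (hq : 2 ≤ q) : alphaQ q ≤ 1 := by
  have h := alpha_le_gpp hq 0
  simpa [gpp] using h

lemma piSym_nonneg (hq : 2 ≤ q) (k : ℕ) : 0 ≤ piSym q k := by
  rw [piSym_eq]
  have := alpha_pos hq
  have := Dk_pos hq k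
  positivity

lemma piSym_le (hq : 2 ≤ q) (k : ℕ) : piSym q k ≤ 2 * (1 / 2) ^ k := by
  rw [piSym_eq]
  have hD := Dk_pos hq k
  have hg := Dk_ge hq k
  have ha := alpha_le_one hq
  have hap := alpha_pos hq
  rw [div_le_iff₀ hD]
  have h2 : (0:ℝ) < 2 ^ k := by positivity
  calc alphaQ q ≤ 1 := ha
    _ = 2 ^ k * ((2:ℝ) ^ k)⁻¹ := by field_simp
    _ ≤ 2 * Dk q k * ((2:ℝ) ^ k)⁻¹ := mul_le_mul_of_nonneg_right hg (by positivity)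
    _ = 2 * (1/2) ^ k * Dk q k := by rw [one_div, inv_pow]; ring

lemma summable_piSym (hq : 2 ≤ q) : Summable (piSym q) := by
  apply Summable.of_nonneg_of_le (piSym_nonneg hq) (piSym_le hq)
  exact (summable_geometric_of_lt_one (by norm_num) (by norm_num)).mul_left 2



lemma tendsto_Opp (hq : 2 ≤ q) : Tendsto (fun n => Opp q n) atTop (𝓝 (alphaQ q)) := by
  have hhalf : Tendsto (fun n : ℕ => (n + 1) / 2) atTop atTop := by
    rw [Filter.tendsto_atTop]
    intro b
    rw [Filter.eventually_atTop]
    exact ⟨2 * b, fun n hn => by omega⟩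
  exact (tendsto_gpp hq).comp hhalf

lemma geom_sum_le_two (hq : 2 ≤ q) (K : ℕ) : ∑ j ∈ Finset.range K, q⁻¹ ^ j ≤ 2 := by
  have ht := ht_pos hq
  have th := ht_half hq
  have hne : q⁻¹ ≠ 1 := by intro h; rw [h] at th; norm_num at th
  rw [geom_sum_eq hne]
  have h1 : 0 < 1 - q⁻¹ := by linarith
  have h2 : 0 < q⁻¹ ^ K := by positivity
  rw [div_le_iff_of_neg (by linarith : q⁻¹ - 1 < 0)]
  nlinarith

lemma geom_Ico_le (hq : 2 ≤ q) (a b : ℕ) :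
    ∑ i ∈ Finset.Ico a b, q⁻¹ ^ (i + 1) ≤ 2 * q⁻¹ ^ (a + 1) := by
  rcases le_or_gt a b with h | h
  · rw [Finset.sum_Ico_eq_sum_range]
    have he : ∀ j, q⁻¹ ^ (a + j + 1) = q⁻¹ ^ (a + 1) * q⁻¹ ^ j := by
      intro j; rw [← pow_add]; ring_nf
    rw [Finset.sum_congr rfl fun j _ => he j, ← Finset.mul_sum]
    have h2 := geom_sum_le_two hq (b - a)
    have h3 := tpow_pos hq (a + 1)
    nlinarith
  · rw [Finset.Ico_eq_empty (by omega)]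
    simp only [Finset.sum_empty]
    positivity

lemma Ev_ge (hq : 2 ≤ q) (a b : ℕ) :
    1 - ∑ i ∈ Finset.Ico a b, q⁻¹ ^ (i + 1) ≤ Ev q a b := by
  have key := prod_one_sub_ge (Finset.Ico a b)
      (fun i => if (i + 1) % 2 = 0 then q⁻¹ ^ (i + 1) else 0)
      (fun i _ => by
        split
        · exact le_of_lt (tpow_pos hq _)
        · exact le_refl 0)
      (fun i _ => by
        split
        · exact le_trans (tpow_succ_le_half hq i) (by norm_num)
        · norm_num)
  have hEv : (∏ i ∈ Finset.Ico a b,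
      (1 - if (i + 1) % 2 = 0 then q⁻¹ ^ (i + 1) else 0)) = Ev q a b := by
    apply Finset.prod_congr rfl
    intro i _
    split <;> simp
  have hsum : (∑ i ∈ Finset.Ico a b, if (i + 1) % 2 = 0 then q⁻¹ ^ (i + 1) else 0)
      ≤ ∑ i ∈ Finset.Ico a b, q⁻¹ ^ (i + 1) := by
    apply Finset.sum_le_sum
    intro i _
    split
    · exact le_refl _
    · exact le_of_lt (tpow_pos hq _)
  rw [hEv] at key
  linarith

lemma tendsto_pow_sub (hq : 2 ≤ q) (k : ℕ) :
    Tendsto (fun n : ℕ => q⁻¹ ^ (n - k + 1)) atTop (𝓝 0) := by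
  have h1 : Tendsto (fun m : ℕ => q⁻¹ ^ m) atTop (𝓝 0) :=
    tendsto_pow_atTop_nhds_zero_of_lt_one (le_of_lt (ht_pos hq))
      (by linarith [ht_half hq])
  have h2 : Tendsto (fun n : ℕ => n - k + 1) atTop atTop := by
    rw [Filter.tendsto_atTop]
    intro b
    rw [Filter.eventually_atTop]
    exact ⟨b + k, fun n hn => by omega⟩
  exact h1.comp h2

lemma tendsto_Ev_diag (hq : 2 ≤ q) (k : ℕ) :
    Tendsto (fun n => Ev q (n - k) n) atTop (𝓝 1) := by
  have hlow : Tendsto (fun n : ℕ => 1 - 2 * q⁻¹ ^ (n - k + 1)) atTop (𝓝 (1 - 2 * 0)) :=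
    tendsto_const_nhds.sub ((tendsto_pow_sub hq k).const_mul 2)
  rw [mul_zero, sub_zero] at hlow
  apply tendsto_of_tendsto_of_tendsto_of_le_of_le hlow tendsto_const_nhds
  · intro n
    have := Ev_ge hq (n - k) n
    have := geom_Ico_le hq (n - k) n
    linarith
  · intro n
    exact Ev_le_one hq (n - k) n

lemma tendsto_muF_pt (hq : 2 ≤ q) (k : ℕ) :
    Tendsto (fun n => muF q n k) atTop (𝓝 (piSym q k)) := by
  have h1 : Tendsto (fun n => Opp q n * Ev q (n - k) n / Dk q k) atTop
      (𝓝 (alphaQ q * 1 / Dk q k)) :=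
    ((tendsto_Opp hq).mul (tendsto_Ev_diag hq k)).div_const _
  rw [mul_one] at h1
  rw [piSym_eq]
  apply h1.congr'
  rw [Filter.eventuallyEq_iff_exists_mem]
  exact ⟨Set.Ici k, Filter.Ici_mem_atTop k, fun n hn => (muF_eq_Ev hq hn).symm⟩

lemma muF_nonneg (hq : 2 ≤ q) (n k : ℕ) : 0 ≤ muF q n k := by
  rcases le_or_gt k n with h | h
  · rw [muF_le n k h]
    have := Opp_pos hq (n - k)
    have := Ipp_pos hq (n - k) n
    have := Dk_pos hq k
    positivity
  · rw [muF_gt n k h]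

lemma inv_Dk_le (hq : 2 ≤ q) (k : ℕ) : (Dk q k)⁻¹ ≤ 2 * (1 / 2) ^ k := by
  have hD := Dk_pos hq k
  have hg := Dk_ge hq k
  have h2 : (0:ℝ) < 2 ^ k := by positivity
  rw [inv_le_iff_one_le_mul₀ hD]
  have : (1:ℝ) = 2 ^ k * ((2:ℝ) ^ k)⁻¹ := by field_simp
  calc (1:ℝ) = 2 ^ k * ((2:ℝ) ^ k)⁻¹ := this
    _ ≤ 2 * Dk q k * ((2:ℝ) ^ k)⁻¹ := mul_le_mul_of_nonneg_right hg (by positivity)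
    _ = 2 * (1/2) ^ k * Dk q k := by rw [one_div, inv_pow]; ring

lemma muF_bound (hq : 2 ≤ q) (n k : ℕ) : muF q n k ≤ 2 * (1 / 2) ^ k := by
  rcases le_or_gt k n with h | h
  · rw [muF_le n k h]
    have hD := Dk_pos hq k
    have hO := Opp_pos hq (n - k)
    have hO1 := Opp_le_one hq (n - k)
    have hI := Ipp_pos hq (n - k) n
    have hI1 := Ipp_le_one hq (n - k) n
    calc Opp q (n - k) * Ipp q (n - k) n / Dk q k
        ≤ 1 * 1 / Dk q k := by
          gcongr
      _ = (Dk q k)⁻¹ := by rw [one_mul, one_div]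
      _ ≤ 2 * (1 / 2) ^ k := inv_Dk_le hq k
  · rw [muF_gt n k h]; positivity

lemma tsum_piSym (hq : 2 ≤ q) : ∑' k, piSym q k = 1 := by
  have hT : Tendsto (fun n => ∑' k, muF q n k) atTop (𝓝 (∑' k, piSym q k)) := by
    apply tendsto_tsum_of_dominated_convergence
      (bound := fun k => 2 * (1 / 2) ^ k)
      ((summable_geometric_of_lt_one (by norm_num) (by norm_num)).mul_left 2)
      (tendsto_muF_pt hq)
    apply Filter.Eventually.of_forall
    intro n k
    rw [Real.norm_eq_abs, abs_of_nonneg (muF_nonneg hq n k)]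
    exact muF_bound hq n k
  have hconst : (fun n => ∑' k, muF q n k) = fun _ => (1:ℝ) := by
    funext n; exact tsum_muF hq n
  rw [hconst] at hT
  exact (tendsto_nhds_unique tendsto_const_nhds hT).symm



lemma SS_small (hq : 2 ≤ q) {n e : ℕ} (h : e + 2 ≤ 2 * ((n + 1) / 2) + 1) :
    SS q ((n + 1) / 2) ≤ q⁻¹ ^ (e + 1) := by
  have h1 := SS_le hq ((n + 1) / 2)
  have h2 : q⁻¹ ^ (2 * ((n + 1) / 2) + 1) ≤ q⁻¹ ^ (e + 2) :=
    pow_le_pow_of_le_one (le_of_lt (ht_pos hq)) (by linarith [ht_half hq]) h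
  have h3 : q⁻¹ ^ (e + 2) = q⁻¹ ^ (e + 1) * q⁻¹ := pow_succ _ _
  have h4 := tpow_pos hq (e + 1)
  have h5 := ht_half hq
  have h6 := ht_pos hq
  nlinarith

lemma neg_core (hq : 2 ≤ q) {n k e' : ℕ} (h1 : n - k ≤ e') (h2 : e' < n)
    (hpar : (e' + 1) % 2 = 0) (hss : e' + 2 ≤ 2 * ((n + 1) / 2) + 1) :
    Opp q n * Ev q (n - k) n ≤ alphaQ q := by
  have hEv := Ev_le_single hq h1 h2 hpar
  have hSS : SS q ((n + 1) / 2) ≤ q⁻¹ ^ (e' + 1) := SS_small hq hss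
  have hfA : Opp q n * (1 - SS q ((n + 1) / 2)) ≤ alphaQ q := factA hq ((n + 1) / 2)
  have hOp := Opp_pos hq n
  calc Opp q n * Ev q (n - k) n ≤ Opp q n * (1 - q⁻¹ ^ (e' + 1)) := by nlinarith
    _ ≤ Opp q n * (1 - SS q ((n + 1) / 2)) := by nlinarith
    _ ≤ alphaQ q := hfA

lemma neg_part (hq : 2 ≤ q) {n k : ℕ} (hn : 1 ≤ n) (hk : 1 ≤ k) (hkn : k ≤ n)
    (h' : ¬(k = 1 ∧ n % 2 = 1)) : muF q n k ≤ piSym q k := by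
  rw [muF_eq_Ev hq hkn, piSym_eq, div_le_div_iff_of_pos_right (Dk_pos hq k)]
  rcases Nat.mod_two_eq_zero_or_one n with h | h
  · exact neg_core hq (e' := n - 1) (by omega) (by omega) (by omega) (by omega)
  · have hk2 : 2 ≤ k := by
      rcases Nat.lt_or_ge k 2 with h2 | h2
      · exact absurd ⟨by omega, h⟩ h'
      · exact h2
    exact neg_core hq (e' := n - 2) (by omega) (by omega) (by omega) (by omega)

lemma piSym_zero : piSym q 0 = alphaQ q := by
  rw [piSym_eq, Dk_zero, div_one]

lemma pos0 (hq : 2 ≤ q) (n : ℕ) : piSym q 0 ≤ muF q n 0 := by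
  rw [piSym_zero, muF_zero']
  exact alpha_le_gpp hq ((n + 1) / 2)

lemma muF_one_odd (hq : 2 ≤ q) {n : ℕ} (hn : 1 ≤ n) (hodd : n % 2 = 1) :
    muF q n 1 = Opp q n / (q - 1) := by
  obtain ⟨m, rfl⟩ : ∃ m, n = m + 1 := ⟨n - 1, by omega⟩
  rw [muF_le (m + 1) 1 (by omega)]
  have hs : m + 1 - 1 = m := by omega
  rw [hs, Ipp_succ_bot (by omega : m < m + 1), Ipp_self, Dk_one,
    Opp_succ_odd m hodd]
  ring

/-- the total-variation identity -/
lemma tv_eq (hq : 2 ≤ q) {n : ℕ} (hn : 1 ≤ n) :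
    ∑' k, |muF q n k - piSym q k|
      = 2 * ((muF q n 0 - piSym q 0) + max (muF q n 1 - piSym q 1) 0) := by
  set f : ℕ → ℝ := fun k => muF q n k - piSym q k with hf
  have hsf : Summable f := (summable_muF n).sub (summable_piSym hq)
  have hsupp : ∀ k ∉ ({0, 1} : Finset ℕ), max (f k) 0 = 0 := by
    intro k hk
    simp only [Finset.mem_insert, Finset.mem_singleton, not_or] at hk
    have hfk : f k ≤ 0 := by
      rcases le_or_gt k n with h | h
      · have := neg_part hq hn (by omega) h (by
          intro ⟨h1, _⟩; exact hk.1 (by omega) |>.elim)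
        simp only [hf]; linarith
      · simp only [hf, muF_gt n k h]
        have := piSym_nonneg hq k
        linarith
    exact max_eq_right hfk
  have hsmax : Summable (fun k => max (f k) 0) :=
    summable_of_ne_finset_zero (s := ({0, 1} : Finset ℕ)) hsupp
  have habs : ∀ k, |f k| = 2 * max (f k) 0 - f k := by
    intro k
    rcases le_total 0 (f k) with h | h
    · rw [abs_of_nonneg h, max_eq_left h]; ring
    · rw [abs_of_nonpos h, max_eq_right h]; ring
  have h1 : ∑' k, |f k| = ∑' k, (2 * max (f k) 0 - f k) := by
    congr 1; funext k; exact habs k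
  have h2 : ∑' k, (2 * max (f k) 0 - f k)
      = (∑' k, 2 * max (f k) 0) - ∑' k, f k :=
    Summable.tsum_sub (hsmax.mul_left 2) hsf
  have h3 : ∑' k, f k = 0 := by
    rw [hf, Summable.tsum_sub (summable_muF n) (summable_piSym hq), tsum_muF hq, tsum_piSym hq]
    ring
  have h4 : ∑' k, 2 * max (f k) 0 = 2 * ∑' k, max (f k) 0 := tsum_mul_left
  have h5 : ∑' k, max (f k) 0 = max (f 0) 0 + max (f 1) 0 := by
    rw [tsum_eq_sum (s := ({0, 1} : Finset ℕ)) hsupp,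
      Finset.sum_insert (by decide), Finset.sum_singleton]
  have h6 : max (f 0) 0 = f 0 := max_eq_left (by
    have := pos0 hq n; simp only [hf]; linarith)
  rw [h1, h2, h3, h4, h5, h6]
  ring


lemma final_bound (hq : 2 ≤ q) :
    32 / 9 * q⁻¹ ^ 2 ≤ Real.sqrt ((alphaQ q)⁻¹ ^ 2 - 1) := by
  have ht0 := ht_pos hq
  have th := ht_half hq
  have ha3 := alpha_pos hq
  have hale := alpha_le_one_sub hq
  set t := q⁻¹
  have h1t : 0 < 1 - t := by linarith
  rw [Real.le_sqrt' (by positivity)]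
  have h1 : 1 + 2 * t ≤ ((1 - t) ^ 2)⁻¹ := by
    rw [inv_eq_one_div, le_div_iff₀ (by positivity)]
    nlinarith [mul_nonneg (sq_nonneg t) (by linarith : (0:ℝ) ≤ 3 - 2 * t)]
  have h2 : ((1 - t) ^ 2)⁻¹ ≤ (alphaQ q ^ 2)⁻¹ := by
    apply inv_anti₀ (by positivity)
    nlinarith
  have h3 : (alphaQ q)⁻¹ ^ 2 = (alphaQ q ^ 2)⁻¹ := inv_pow _ _
  have h4 : 2 * t ≤ (alphaQ q)⁻¹ ^ 2 - 1 := by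
    rw [h3]; linarith
  have h5 : (32 / 9 * t ^ 2) ^ 2 ≤ 2 * t := by
    have h8 : t ^ 3 ≤ (1/2) ^ 3 := pow_le_pow_left₀ ht0.le th 3
    nlinarith [mul_le_mul_of_nonneg_left h8 ht0.le]
  linarith

lemma main_term_even (hq : 2 ≤ q) {n : ℕ} (hM : 2 * ((n + 1) / 2) + 1 = n + 1) :
    2 * q * alphaQ q / (q ^ 2 - 1) * q⁻¹ ^ n
      = 2 * alphaQ q * SS q ((n + 1) / 2) := by
  unfold SS
  rw [hM]
  have hq0' : q ≠ 0 := hq0 hq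
  have h2 : (0:ℝ) < 1 - q⁻¹ ^ 2 := one_sub_sq_pos hq
  have h3 : (0:ℝ) < q ^ 2 - 1 := by nlinarith
  have h2' : 1 - ((q:ℝ) ^ 2)⁻¹ ≠ 0 := by
    rw [← inv_pow]; exact h2.ne'
  simp only [inv_pow]
  field_simp
  ring

lemma main_term_odd (hq : 2 ≤ q) {n : ℕ} (hM : 2 * ((n + 1) / 2) + 1 = n + 2) :
    2 * q * alphaQ q / ((q ^ 2 - 1) * (q - 1)) * q⁻¹ ^ n
      = 2 * alphaQ q * SS q ((n + 1) / 2)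
        + 2 * alphaQ q * SS q ((n + 1) / 2) / (q - 1) := by
  unfold SS
  rw [hM]
  have hq0' : q ≠ 0 := hq0 hq
  have h2 : (0:ℝ) < 1 - q⁻¹ ^ 2 := one_sub_sq_pos hq
  have h3 : (0:ℝ) < q ^ 2 - 1 := by nlinarith
  have h4 : (0:ℝ) < q - 1 := by linarith
  simp only [inv_pow]
  field_simp
  ring

end Stmt13

open Stmt13

/-- For every prime power `q` and `n ≥ 1`,
`|‖δ₀P_sym^n − π_sym‖_tv − c_n·q^{−n}| ≤ (α(q)^{−2} − 1)^{1/2}·q^{−2n}` with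
`c_n = 2qα(q)/(q²−1)` for even `n` and `c_n = 2qα(q)/((q²−1)(q−1))` for odd `n`. -/
theorem stmt13 (q : ℕ) (hq : IsPrimePow q) (n : ℕ) (hn : 1 ≤ n) :
    |(∑' i : ℕ, |(applyP (Psym q))^[n] delta0 i - piSym q i|)
        - (if n % 2 = 0 then 2 * (q : ℝ) * alphaQ q / ((q : ℝ) ^ 2 - 1)
           else 2 * (q : ℝ) * alphaQ q / (((q : ℝ) ^ 2 - 1) * ((q : ℝ) - 1))) * (q : ℝ)⁻¹ ^ n|
      ≤ Real.sqrt ((alphaQ q)⁻¹ ^ 2 - 1) * (q : ℝ)⁻¹ ^ (2 * n) := by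
  have hq2 : (2:ℝ) ≤ (q:ℝ) := by exact_mod_cast hq.two_le
  rw [iter_eq hq2 n, tv_eq hq2 hn]
  have ht0 := ht_pos hq2
  have th := ht_half hq2
  have hGa : alphaQ (q:ℝ) ≤ Opp (q:ℝ) n := alpha_le_gpp hq2 ((n + 1) / 2)
  have hG1 : Opp (q:ℝ) n ≤ 1 := Opp_le_one hq2 n
  have hS0 : 0 ≤ SS (q:ℝ) ((n + 1) / 2) := SS_nonneg hq2 _
  have hfA : Opp (q:ℝ) n * (1 - SS (q:ℝ) ((n + 1) / 2)) ≤ alphaQ (q:ℝ) :=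
    factA hq2 ((n + 1) / 2)
  have hfB : alphaQ (q:ℝ) * (1 + SS (q:ℝ) ((n + 1) / 2)) ≤ Opp (q:ℝ) n :=
    factB hq2 ((n + 1) / 2)
  set G := Opp (q:ℝ) n with hGdef
  set α := alphaQ (q:ℝ) with hadef
  set S := SS (q:ℝ) ((n + 1) / 2) with hSdef
  have ha3 : 1/3 ≤ α := alpha_pos hq2
  have hkey1 : 0 ≤ G - α - α * S := by nlinarith
  have hkey2 : G - α - α * S ≤ S ^ 2 := by nlinarith
  have hpow2 : ((q:ℝ)⁻¹ ^ (2 * ((n + 1) / 2) + 1)) ^ 2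
      = (q:ℝ)⁻¹ ^ (2 * (2 * ((n + 1) / 2) + 1)) := by
    rw [← pow_mul]; congr 1; ring
  have hSle : S ≤ 4 / 3 * (q:ℝ)⁻¹ ^ (2 * ((n + 1) / 2) + 1) := SS_le hq2 _
  have hfinal : 32 / 9 * (q:ℝ)⁻¹ ^ 2 ≤ Real.sqrt (α⁻¹ ^ 2 - 1) := final_bound hq2
  have hμ0 : muF (q:ℝ) n 0 - piSym (q:ℝ) 0 = G - α := by
    rw [muF_zero', piSym_zero]
  rcases Nat.mod_two_eq_zero_or_one n with hpar | hpar
  · -- n even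
    have hM : 2 * ((n + 1) / 2) + 1 = n + 1 := by omega
    rw [if_pos hpar]
    have hmax1 : max (muF (q:ℝ) n 1 - piSym (q:ℝ) 1) 0 = 0 := by
      apply max_eq_right
      have := neg_part hq2 hn le_rfl (by omega) (by omega)
      linarith
    rw [hmax1, hμ0, add_zero, main_term_even hq2 hM]
    have habs : |2 * (G - α) - 2 * α * S| = 2 * (G - α - α * S) := by
      rw [abs_of_nonneg (by linarith)]; ring
    rw [habs]
    have hb1 : 2 * (G - α - α * S) ≤ 2 * S ^ 2 := by linarith
    have hb2 : S ^ 2 ≤ (4 / 3 * (q:ℝ)⁻¹ ^ (2 * ((n + 1) / 2) + 1)) ^ 2 := by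
      apply pow_le_pow_left₀ hS0 hSle
    have hb3 : (4 / 3 * (q:ℝ)⁻¹ ^ (2 * ((n + 1) / 2) + 1)) ^ 2
        = 16 / 9 * (q:ℝ)⁻¹ ^ (2 * n + 2) := by
      rw [mul_pow, hpow2, hM, show 2 * (n + 1) = 2 * n + 2 from by omega]
      norm_num
    have hb4 : (q:ℝ)⁻¹ ^ (2 * n + 2) = (q:ℝ)⁻¹ ^ 2 * (q:ℝ)⁻¹ ^ (2 * n) := by
      rw [← pow_add]; congr 1; omega
    have hb5 : 0 ≤ (q:ℝ)⁻¹ ^ (2 * n) := by positivity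
    calc 2 * (G - α - α * S) ≤ 2 * (16 / 9 * ((q:ℝ)⁻¹ ^ 2 * (q:ℝ)⁻¹ ^ (2 * n))) := by
          rw [← hb4, ← hb3]; linarith
      _ = (32 / 9 * (q:ℝ)⁻¹ ^ 2) * (q:ℝ)⁻¹ ^ (2 * n) := by ring
      _ ≤ Real.sqrt (α⁻¹ ^ 2 - 1) * (q:ℝ)⁻¹ ^ (2 * n) :=
          mul_le_mul_of_nonneg_right hfinal hb5
  · -- n odd
    have hM : 2 * ((n + 1) / 2) + 1 = n + 2 := by omega
    rw [if_neg (by omega)]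
    have hq1 : (0:ℝ) < (q:ℝ) - 1 := by linarith
    have hmax1 : max (muF (q:ℝ) n 1 - piSym (q:ℝ) 1) 0
        = (G - α) / ((q:ℝ) - 1) := by
      rw [muF_one_odd hq2 hn hpar, piSym_eq, Dk_one, div_sub_div_same]
      exact max_eq_left (div_nonneg (by linarith) hq1.le)
    rw [hmax1, hμ0, main_term_odd hq2 hM]
    have hX : (0:ℝ) ≤ G - α - α * S := hkey1
    have hinv1 : ((q:ℝ) - 1)⁻¹ ≤ 1 := by
      rw [inv_le_one_iff₀]; right; linarith
    have hnn : (0:ℝ) ≤ 2 * (G - α - α * S) + 2 * (G - α - α * S) / ((q:ℝ) - 1) :=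
      add_nonneg (by linarith) (div_nonneg (by linarith) hq1.le)
    rw [show 2 * ((G - α) + (G - α) / ((q:ℝ) - 1))
        - (2 * α * S + 2 * α * S / ((q:ℝ) - 1))
        = 2 * (G - α - α * S) + 2 * (G - α - α * S) / ((q:ℝ) - 1) from by ring,
      abs_of_nonneg hnn]
    have hb0 : 2 * (G - α - α * S) + 2 * (G - α - α * S) / ((q:ℝ) - 1)
        ≤ 4 * (G - α - α * S) := by
      rw [div_eq_mul_inv]
      nlinarith
    have hb2 : S ^ 2 ≤ (4 / 3 * (q:ℝ)⁻¹ ^ (2 * ((n + 1) / 2) + 1)) ^ 2 :=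
      pow_le_pow_left₀ hS0 hSle 2
    have hb3 : (4 / 3 * (q:ℝ)⁻¹ ^ (2 * ((n + 1) / 2) + 1)) ^ 2
        = 16 / 9 * ((q:ℝ)⁻¹ ^ 4 * (q:ℝ)⁻¹ ^ (2 * n)) := by
      rw [mul_pow, hpow2, hM]
      rw [show (q:ℝ)⁻¹ ^ (2 * (n + 2)) = (q:ℝ)⁻¹ ^ 4 * (q:ℝ)⁻¹ ^ (2 * n) from by
        rw [← pow_add]; congr 1; omega]
      norm_num
    have ht4 : (q:ℝ)⁻¹ ^ 4 ≤ 1 / 4 * (q:ℝ)⁻¹ ^ 2 := by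
      rw [show (4:ℕ) = 2 + 2 from rfl, pow_add]
      have h14 : (q:ℝ)⁻¹ ^ 2 ≤ 1 / 4 := by nlinarith
      nlinarith [tpow_pos hq2 2]
    have hb5 : (0:ℝ) ≤ (q:ℝ)⁻¹ ^ (2 * n) := by positivity
    calc 2 * (G - α - α * S) + 2 * (G - α - α * S) / ((q:ℝ) - 1)
        ≤ 4 * (G - α - α * S) := hb0
      _ ≤ 4 * S ^ 2 := by linarith
      _ ≤ 4 * (16 / 9 * ((q:ℝ)⁻¹ ^ 4 * (q:ℝ)⁻¹ ^ (2 * n))) := by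
          rw [← hb3]; linarith
      _ ≤ 4 * (16 / 9 * (1 / 4 * (q:ℝ)⁻¹ ^ 2 * (q:ℝ)⁻¹ ^ (2 * n))) := by
          have := mul_le_mul_of_nonneg_right ht4 hb5
          nlinarith
      _ = (16 / 9 * (q:ℝ)⁻¹ ^ 2) * (q:ℝ)⁻¹ ^ (2 * n) := by ring
      _ ≤ (32 / 9 * (q:ℝ)⁻¹ ^ 2) * (q:ℝ)⁻¹ ^ (2 * n) := by
          have h2nn : (0:ℝ) ≤ (q:ℝ)⁻¹ ^ 2 := by positivity
          nlinarith
      _ ≤ Real.sqrt (α⁻¹ ^ 2 - 1) * (q:ℝ)⁻¹ ^ (2 * n) :=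
          mul_le_mul_of_nonneg_right hfinal hb5
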